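/- Let E(c, S) = Σ_{i=0}^{n-1} τ(S_i, c_i) be the ellipsoidal weight of a binary vector c ∈ F2^n with respect to LLRs S ∈ ℝ^n. Then for any c ∈ F2^{2n} and S ∈ ℝ^{2n}, E(c, S) = E(c_0^{n-1} ⊕ c_n^{2n-1}, S̃) + E(c_n^{2n-1}, S̄), where S̃_i = Q(S_i, S_{i+n}) and S̄_i = P(c_i ⊕ c_{i+n}, S_i, S_{i+n}). -/

import Mathlib

/-- Penalty function τ(S,v): 0 if sgn(S) = (-1)^v (with τ(0,v)=0), else -|S|. -/
noncomputable def tau (S : ℝ) (v : ZMod 2) : ℝ :=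
  if (v = 0 ∧ 0 ≤ S) ∨ (v = 1 ∧ S ≤ 0) then 0 else -|S|

/-- Min-sum check-node update Q(a,b) = sgn(a)·sgn(b)·min(|a|,|b|). -/
noncomputable def Qf (a b : ℝ) : ℝ := Real.sign a * Real.sign b * min |a| |b|

/-- Variable-node update P(v,a,b) = (-1)^v·a + b. -/
noncomputable def Pf (v : ZMod 2) (a b : ℝ) : ℝ := (if v = 0 then a else -a) + b

/-- Ellipsoidal weight E(c,S) = Σ_{i<n} τ(S_i, c_i). -/
noncomputable def Ew (n : ℕ) (c : ℕ → ZMod 2) (S : ℕ → ℝ) : ℝ :=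
  ∑ i ∈ Finset.range n, tau (S i) (c i)

set_option maxHeartbeats 2000000 in
lemma key (a b : ℝ) (u v : ZMod 2) :
    tau a u + tau b v = tau (Qf a b) (u + v) + tau (Pf (u + v) a b) v := by
  have hu : u = 0 ∨ u = 1 := by fin_cases u; exacts [Or.inl rfl, Or.inr rfl]
  have hv : v = 0 ∨ v = 1 := by fin_cases v; exacts [Or.inl rfl, Or.inr rfl]
  have h11 : (1:ZMod 2)+1 = 0 := rfl
  have h10 : ((1:ZMod 2) = 0) = False := by simp
  rcases lt_trichotomy a 0 with ha | ha | ha <;>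
  rcases lt_trichotomy b 0 with hb | hb | hb <;>
  rcases hu with hu | hu <;> rcases hv with hv | hv <;>
  subst hu hv <;>
  simp [tau, Qf, Pf, h11, h10, Real.sign_of_pos, Real.sign_of_neg, Real.sign_zero, *] <;>
  rcases le_total |a| |b| with h | h <;>
  rcases le_total a 0 with h2 | h2 <;>
  rcases le_total b 0 with h3 | h3 <;>
  simp_all [abs_of_pos, abs_of_neg, abs_of_nonneg, abs_of_nonpos, min_def]
  all_goals try split_ifs
  all_goals try casesm* _ ∨ _
  all_goals try linarith
  all_goals intros
  all_goals first
    | (rcases abs_cases (a + b) with ⟨h4, h5⟩ | ⟨h4, h5⟩ <;> linarith)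
    | (rcases abs_cases (-a + b) with ⟨h4, h5⟩ | ⟨h4, h5⟩ <;> linarith)
    | (rcases abs_cases (a - b) with ⟨h4, h5⟩ | ⟨h4, h5⟩ <;> linarith)
    | (rcases abs_cases (b - a) with ⟨h4, h5⟩ | ⟨h4, h5⟩ <;> linarith)
    | (rcases abs_cases (-a - b) with ⟨h4, h5⟩ | ⟨h4, h5⟩ <;> linarith)
    | (rcases abs_cases (-b - a) with ⟨h4, h5⟩ | ⟨h4, h5⟩ <;> linarith)

/-- Lemma 1 (WeightSum). -/
theorem stmt1 (n : ℕ) (c : ℕ → ZMod 2) (S : ℕ → ℝ) :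
    Ew (2 * n) c S =
      Ew n (fun i => c i + c (i + n)) (fun i => Qf (S i) (S (i + n))) +
      Ew n (fun i => c (i + n)) (fun i => Pf (c i + c (i + n)) (S i) (S (i + n))) := by
  unfold Ew
  rw [two_mul, Finset.sum_range_add (fun i => tau (S i) (c i)) n n, ← Finset.sum_add_distrib, ← Finset.sum_add_distrib]
  apply Finset.sum_congr rfl
  intro i hi
  simpa [add_comm] using key (S i) (S (i + n)) (c i) (c (i + n))
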